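/- For every integer m ≥ 1, all points u, v ∈ ℝ^m and every M > 0, one has ∫_{[−M,M]^m} |1_{Q_u}(t) − 1_{Q_v}(t)| dt ≤ (2M)^{m−1} · ‖u − v‖₁, where ‖·‖₁ denotes the ℓ¹ norm on ℝ^m. -/

import Mathlib

open MeasureTheory
open scoped Classical

private lemma measQ (m : ℕ) (u : Fin m → ℝ) : MeasurableSet {t : Fin m → ℝ | u ≤ t} := by
  have : {t : Fin m → ℝ | u ≤ t} = Set.univ.pi (fun i => Set.Ici (u i)) := by
    ext t; simp [Pi.le_def]
  rw [this]
  exact MeasurableSet.univ_pi (fun i => measurableSet_Ici)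

private lemma box_inter (m : ℕ) (M a b : ℝ) (i : Fin m) :
    (Set.Icc (fun _ => -M) (fun _ => M) : Set (Fin m → ℝ)) ∩ {t | t i ∈ Set.Ico a b}
      = Set.univ.pi (fun j => if j = i then Set.Icc (-M) M ∩ Set.Ico a b
          else Set.Icc (-M) M) := by
  ext t
  simp only [Set.mem_inter_iff, Set.mem_Icc, Set.mem_setOf_eq, Set.mem_univ_pi, Pi.le_def]
  constructor
  · rintro ⟨⟨h1, h2⟩, h3⟩ j
    by_cases hj : j = i
    · subst hj; rw [if_pos rfl]; exact ⟨⟨h1 j, h2 j⟩, h3⟩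
    · rw [if_neg hj]; exact ⟨h1 j, h2 j⟩
  · intro h
    have hIcc : ∀ j, t j ∈ Set.Icc (-M) M := by
      intro j
      have := h j
      by_cases hj : j = i
      · subst hj; rw [if_pos rfl] at this; exact this.1
      · rwa [if_neg hj] at this
    have hi := h i
    rw [if_pos rfl] at hi
    exact ⟨⟨fun j => (hIcc j).1, fun j => (hIcc j).2⟩, hi.2⟩

private lemma vol_le (m : ℕ) (M a b : ℝ) (hM : 0 < M) (hab : a ≤ b) (i : Fin m) :
    (volume ((Set.Icc (fun _ => -M) (fun _ => M) : Set (Fin m → ℝ))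
        ∩ {t | t i ∈ Set.Ico a b})).toReal ≤ (2 * M) ^ (m - 1) * (b - a) := by
  rw [box_inter, volume_pi_pi]
  have h2 : ∏ j ∈ Finset.univ.erase i, volume (if j = i then Set.Icc (-M) M ∩ Set.Ico a b
      else Set.Icc (-M) M) = ENNReal.ofReal (2 * M) ^ (m - 1) := by
    have hc : ∀ j ∈ Finset.univ.erase i,
        volume (if j = i then Set.Icc (-M) M ∩ Set.Ico a b else Set.Icc (-M) M)
          = ENNReal.ofReal (2 * M) := by
      intro j hj
      rw [if_neg (Finset.ne_of_mem_erase hj), Real.volume_Icc]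
      congr 1; ring
    rw [Finset.prod_congr rfl hc, Finset.prod_const,
      Finset.card_erase_of_mem (Finset.mem_univ i), Finset.card_univ, Fintype.card_fin]
  have key : (∏ j : Fin m, volume (if j = i then Set.Icc (-M) M ∩ Set.Ico a b
      else Set.Icc (-M) M))
      ≤ ENNReal.ofReal (b - a) * ENNReal.ofReal (2 * M) ^ (m - 1) := by
    rw [← Finset.mul_prod_erase Finset.univ _ (Finset.mem_univ i), h2]
    have h1 : volume (if i = i then Set.Icc (-M) M ∩ Set.Ico a b else Set.Icc (-M) M)
        ≤ ENNReal.ofReal (b - a) := by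
      rw [if_pos rfl]
      calc volume (Set.Icc (-M) M ∩ Set.Ico a b) ≤ volume (Set.Ico a b) :=
            measure_mono Set.inter_subset_right
        _ = ENNReal.ofReal (b - a) := Real.volume_Ico
    exact mul_le_mul_of_nonneg_right h1 (zero_le)
  calc (∏ j : Fin m, volume (if j = i then Set.Icc (-M) M ∩ Set.Ico a b
        else Set.Icc (-M) M)).toReal
      ≤ (ENNReal.ofReal (b - a) * ENNReal.ofReal (2 * M) ^ (m - 1)).toReal := by
        apply ENNReal.toReal_mono _ key
        exact ENNReal.mul_ne_top ENNReal.ofReal_ne_top (ENNReal.pow_ne_top ENNReal.ofReal_ne_top)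
    _ = (2 * M) ^ (m - 1) * (b - a) := by
        rw [ENNReal.toReal_mul, ENNReal.toReal_pow,
          ENNReal.toReal_ofReal (sub_nonneg.mpr hab),
          ENNReal.toReal_ofReal (by linarith)]
        ring

private lemma ptwise (m : ℕ) (u v t : Fin m → ℝ) :
    |(if u ≤ t then (1:ℝ) else 0) - (if v ≤ t then 1 else 0)|
      ≤ ∑ i, ({s : Fin m → ℝ | s i ∈ Set.Ico (min (u i) (v i)) (max (u i) (v i))}).indicator
          (fun _ => (1:ℝ)) t := by
  have hnonneg : ∀ i ∈ Finset.univ, (0:ℝ) ≤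
      ({s : Fin m → ℝ | s i ∈ Set.Ico (min (u i) (v i)) (max (u i) (v i))}).indicator
        (fun _ => (1:ℝ)) t :=
    fun i _ => Set.indicator_nonneg (fun _ _ => zero_le_one) t
  have key : ∀ i : Fin m, min (u i) (v i) ≤ t i → t i < max (u i) (v i) →
      (1:ℝ) ≤ ∑ i, ({s : Fin m → ℝ | s i ∈ Set.Ico (min (u i) (v i)) (max (u i) (v i))}).indicator
          (fun _ => (1:ℝ)) t := by
    intro i h1 h2
    have hmem : t ∈ {s : Fin m → ℝ | s i ∈ Set.Ico (min (u i) (v i)) (max (u i) (v i))} :=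
      ⟨h1, h2⟩
    have := Finset.single_le_sum hnonneg (Finset.mem_univ i)
    rwa [Set.indicator_of_mem hmem] at this
  by_cases hu : u ≤ t <;> by_cases hv : v ≤ t
  · rw [if_pos hu, if_pos hv, sub_self, abs_zero]
    exact Finset.sum_nonneg hnonneg
  · rw [if_pos hu, if_neg hv, sub_zero, abs_one]
    rw [Pi.le_def, not_forall] at hv
    obtain ⟨i, hi⟩ := hv
    push_neg at hi
    exact key i (le_trans (min_le_left _ _) (hu i)) (lt_of_lt_of_le hi (le_max_right _ _))
  · rw [if_neg hu, if_pos hv, zero_sub, abs_neg, abs_one]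
    rw [Pi.le_def, not_forall] at hu
    obtain ⟨i, hi⟩ := hu
    push_neg at hi
    exact key i (le_trans (min_le_right _ _) (hv i)) (lt_of_lt_of_le hi (le_max_left _ _))
  · rw [if_neg hu, if_neg hv, sub_self, abs_zero]
    exact Finset.sum_nonneg hnonneg

/-- For every integer `m ≥ 1`, all `u v : ℝ^m` and every `M > 0`,
`∫_{[−M,M]^m} |1_{Q_u}(t) − 1_{Q_v}(t)| dt ≤ (2M)^{m−1} ⬝ ‖u − v‖₁`, where
`Q_u = {t | u ≤ t}` (coordinatewise order) and `‖·‖₁` is the ℓ¹ norm. -/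
theorem stmt0 (m : ℕ) (hm : 1 ≤ m) (u v : Fin m → ℝ) (M : ℝ) (hM : 0 < M) :
    (∫ t in (Set.Icc (fun _ => -M) (fun _ => M) : Set (Fin m → ℝ)),
        |(if u ≤ t then (1 : ℝ) else 0) - (if v ≤ t then (1 : ℝ) else 0)|)
      ≤ (2 * M) ^ (m - 1) * ∑ i, |u i - v i| := by
  set box : Set (Fin m → ℝ) := Set.Icc (fun _ => -M) (fun _ => M) with hbox
  have hboxvol : volume box < ⊤ := isCompact_Icc.measure_lt_top
  set S : Fin m → Set (Fin m → ℝ) :=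
    fun i => {s : Fin m → ℝ | s i ∈ Set.Ico (min (u i) (v i)) (max (u i) (v i))} with hS
  have hSm : ∀ i, MeasurableSet (S i) :=
    fun i => (measurable_pi_apply i) measurableSet_Ico
  have hfin : IsFiniteMeasure (volume.restrict box) :=
    ⟨by rwa [Measure.restrict_apply_univ]⟩
  have hind : ∀ w : Fin m → ℝ, IntegrableOn (fun t => if w ≤ t then (1:ℝ) else 0) box := by
    intro w
    have : (fun t => if w ≤ t then (1:ℝ) else 0)
        = Set.indicator {t : Fin m → ℝ | w ≤ t} (fun _ => (1:ℝ)) := by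
      ext t; simp [Set.indicator_apply]
    rw [this]
    exact (integrable_const (1:ℝ)).indicator (measQ m w)
  have hIS : ∀ i, IntegrableOn ((S i).indicator (fun _ => (1:ℝ))) box :=
    fun i => (integrable_const (1:ℝ)).indicator (hSm i)
  calc (∫ t in box, |(if u ≤ t then (1 : ℝ) else 0) - (if v ≤ t then (1 : ℝ) else 0)|)
      ≤ ∫ t in box, ∑ i, (S i).indicator (fun _ => (1:ℝ)) t := by
        refine setIntegral_mono (((hind u).sub (hind v)).abs) ?_ (fun t => ptwise m u v t)
        exact integrable_finset_sum _ (fun i _ => hIS i)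
    _ = ∑ i, ∫ t in box, (S i).indicator (fun _ => (1:ℝ)) t :=
        integral_finset_sum _ (fun i _ => hIS i)
    _ = ∑ i, (volume (box ∩ S i)).toReal := by
        refine Finset.sum_congr rfl (fun i _ => ?_)
        rw [setIntegral_indicator (hSm i), setIntegral_const, smul_eq_mul, mul_one]
        rfl
    _ ≤ ∑ i, (2 * M) ^ (m - 1) * (max (u i) (v i) - min (u i) (v i)) := by
        refine Finset.sum_le_sum (fun i _ => ?_)
        exact vol_le m M _ _ hM (min_le_max) i
    _ = (2 * M) ^ (m - 1) * ∑ i, |u i - v i| := by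
        rw [Finset.mul_sum]
        refine Finset.sum_congr rfl (fun i _ => ?_)
        rw [max_sub_min_eq_abs, abs_sub_comm]
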